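/- If (z_m) is a bounded sequence in ℓ∞ converging coordinate-wise to z ∈ ℓ∞, then lim_m |||z_m||| exists if and only if lim_m ‖z_m‖_∞ exists; moreover lim_m |||z_m||| = |||z||| if and only if lim_m ‖z_m‖_∞ = ‖z‖_∞. -/

import Mathlib

open Filter Topology

/-- The sup norm of a real sequence. -/
noncomputable def supNorm (x : ℕ → ℝ) : ℝ := ⨆ k, |x k|

/-- The duality pairing `⟨x, v⟩ = ∑ₖ x k * v k`. -/
noncomputable def pairing (x v : ℕ → ℝ) : ℝ := ∑' k, x k * v k

/-- Read's norm `|||x||| = ‖x‖_∞ + ∑ₙ rₙ |⟨x, vₙ⟩|`. -/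
noncomputable def readNorm (r : ℕ → ℝ) (v : ℕ → ℕ → ℝ) (x : ℕ → ℝ) : ℝ :=
  supNorm x + ∑' n, r n * |pairing x (v n)|

lemma pairing_bound (v : ℕ → ℝ) (hv : Summable fun k => |v k|) (x : ℕ → ℝ) (C : ℝ)
    (hx : ∀ k, |x k| ≤ C) : |pairing x v| ≤ C * ∑' k, |v k| := by
  have hs : Summable fun k => |x k * v k| := by
    refine Summable.of_nonneg_of_le (fun k => abs_nonneg _) (fun k => ?_) (hv.mul_left C)
    rw [abs_mul]; exact mul_le_mul_of_nonneg_right (hx k) (abs_nonneg _)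
  calc |pairing x v| ≤ ∑' k, |x k * v k| := by
        simpa [pairing, Real.norm_eq_abs, abs_mul] using norm_tsum_le_tsum_norm
          (f := fun k => x k * v k) (by simpa [Real.norm_eq_abs, abs_mul] using hs)
    _ ≤ ∑' k, C * |v k| := Summable.tsum_le_tsum (fun k => by
          rw [abs_mul]; exact mul_le_mul_of_nonneg_right (hx k) (abs_nonneg _))
          hs (hv.mul_left C)
    _ = C * ∑' k, |v k| := tsum_mul_left

/-- If `(z_m)` is a bounded sequence in `ℓ∞` converging coordinate-wise to `z ∈ ℓ∞`,
then `lim_m |||z_m|||` exists iff `lim_m ‖z_m‖_∞` exists; moreover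
`lim_m |||z_m||| = |||z|||` iff `lim_m ‖z_m‖_∞ = ‖z‖_∞`. -/
theorem read_norm_convergence_iff_sup_norm_convergence
    (r : ℕ → ℝ) (hr0 : ∀ n, 0 ≤ r n) (hrsum : Summable r)
    (v : ℕ → ℕ → ℝ) (hv1 : ∀ n, Summable fun k => |v n k|)
    (hv2 : ∀ n, ∑' k, |v n k| = 1)
    (z : ℕ → ℕ → ℝ) (C : ℝ) (hbdd : ∀ m k, |z m k| ≤ C)
    (zl : ℕ → ℝ) (hzl : ∀ k, |zl k| ≤ C)
    (hconv : ∀ k, Tendsto (fun m => z m k) atTop (𝓝 (zl k))) :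
    ((∃ L, Tendsto (fun m => readNorm r v (z m)) atTop (𝓝 L)) ↔
      (∃ L, Tendsto (fun m => supNorm (z m)) atTop (𝓝 L))) ∧
    (Tendsto (fun m => readNorm r v (z m)) atTop (𝓝 (readNorm r v zl)) ↔
      Tendsto (fun m => supNorm (z m)) atTop (𝓝 (supNorm zl))) := by
  have hpair : ∀ n, Tendsto (fun m => pairing (z m) (v n)) atTop (𝓝 (pairing zl (v n))) := by
    intro n
    refine tendsto_tsum_of_dominated_convergence ((hv1 n).mul_left C)
      (fun k => (hconv k).mul_const _) (Eventually.of_forall fun m k => ?_)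
    rw [Real.norm_eq_abs, abs_mul]
    exact mul_le_mul_of_nonneg_right (hbdd m k) (abs_nonneg _)
  set g : ℕ → ℝ := fun m => ∑' n, r n * |pairing (z m) (v n)| with hg
  set G : ℝ := ∑' n, r n * |pairing zl (v n)| with hG
  have hS : Tendsto g atTop (𝓝 G) := by
    refine tendsto_tsum_of_dominated_convergence (hrsum.mul_right C)
      (fun n => ((hpair n).abs).const_mul _) (Eventually.of_forall fun m n => ?_)
    rw [Real.norm_eq_abs, abs_mul, abs_of_nonneg (hr0 n), abs_abs]
    exact mul_le_mul_of_nonneg_left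
      (by simpa [hv2 n] using pairing_bound (v n) (hv1 n) (z m) C (hbdd m)) (hr0 n)
  have hrw : ∀ m, readNorm r v (z m) = supNorm (z m) + g m := fun m => rfl
  have hrwl : readNorm r v zl = supNorm zl + G := rfl
  constructor
  · constructor
    · rintro ⟨L, hL⟩
      exact ⟨L - G, by
        have := hL.sub hS
        refine this.congr fun m => ?_
        rw [hrw m]; ring⟩
    · rintro ⟨L, hL⟩
      exact ⟨L + G, by
        have := hL.add hS
        exact this.congr fun m => (hrw m).symm⟩
  · constructor
    · intro hL
      have := hL.sub hS
      rw [hrwl] at this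
      have h2 : supNorm zl + G - G = supNorm zl := by ring
      rw [h2] at this
      refine this.congr fun m => ?_
      rw [hrw m]; ring
    · intro hL
      have := hL.add hS
      rw [hrwl]
      exact this.congr fun m => (hrw m).symm
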